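/- Let a > 1 and let (k_n) be an increasing sequence of positive integers with k_n ≥ 2a for all n. If positive reals (Δ_n) satisfy Δ_n = k_{n+2} Δ_{n+1} + Δ_{n+2}, then for every even n the series δ_n = Σ_{s≥0} a^s Δ_{n+4s+2} converges and satisfies δ_n / Δ_n < 2 / (k_{n+2} k_{n+3}). -/

import Mathlib

theorem stmt3
    (a : ℝ) (ha : 1 < a)
    (k : ℤ → ℕ) (hk : ∀ n : ℤ, 1 ≤ n → 1 ≤ k n)
    (hkmono : ∀ n : ℤ, 1 ≤ n → k n < k (n + 1))
    (hka : ∀ n : ℤ, 1 ≤ n → 2 * a ≤ (k n : ℝ))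
    (Δ : ℤ → ℝ) (hΔpos : ∀ n : ℤ, -1 ≤ n → 0 < Δ n)
    (hrec : ∀ n : ℤ, -1 ≤ n → Δ n = (k (n + 2) : ℝ) * Δ (n + 1) + Δ (n + 2)) :
    ∀ n : ℤ, 0 ≤ n → Even n →
      Summable (fun s : ℕ => a ^ s * Δ (n + 4 * s + 2)) ∧
      (∑' s : ℕ, a ^ s * Δ (n + 4 * s + 2)) / Δ n <
        2 / ((k (n + 2) : ℝ) * (k (n + 3) : ℝ)) := by
  intro n hn _
  have ha0 : 0 < a := lt_trans one_pos ha
  have step1 : ∀ m : ℤ, -1 ≤ m → (k (m+2) : ℝ) * (k (m+3) : ℝ) * Δ (m+2) < Δ m := by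
    intro m hm
    have h1 := hrec m hm
    have h2 := hrec (m+1) (by omega)
    have e1 : m + 1 + 2 = m + 3 := by ring
    have e2 : m + 1 + 1 = m + 2 := by ring
    rw [e1, e2] at h2
    have hk2 : (1:ℝ) ≤ (k (m+2) : ℝ) := by exact_mod_cast hk (m+2) (by omega)
    have hd3 : 0 < Δ (m+3) := hΔpos (m+3) (by omega)
    have hd2 : 0 < Δ (m+2) := hΔpos (m+2) (by omega)
    nlinarith
  have step2 : ∀ m : ℤ, -1 ≤ m → 4 * a^2 * Δ (m+2) < Δ m := by
    intro m hm
    have h1 := step1 m hm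
    have hk2 := hka (m+2) (by omega)
    have hk3 := hka (m+3) (by omega)
    have hd2 : 0 < Δ (m+2) := hΔpos (m+2) (by omega)
    have hkk : 4 * a^2 ≤ (k (m+2) : ℝ) * (k (m+3) : ℝ) := by nlinarith
    nlinarith [mul_le_mul_of_nonneg_right hkk hd2.le]
  have step4 : ∀ m : ℤ, -1 ≤ m → 16 * a^4 * Δ (m+4) ≤ Δ m := by
    intro m hm
    have h1 := step2 m hm
    have h2 := step2 (m+2) (by omega)
    have e : m + 2 + 2 = m + 4 := by ring
    rw [e] at h2
    have hd : 0 < Δ (m+4) := hΔpos (m+4) (by omega)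
    nlinarith
  have key : ∀ s : ℕ, (16*a^4)^s * Δ (n + 4*s + 2) ≤ Δ (n+2) := by
    intro s
    induction s with
    | zero => simp
    | succ s ih =>
      have h2 := step4 (n + 4*s + 2) (by omega)
      have e : (n + 4*((s+1 : ℕ) : ℤ) + 2 : ℤ) = (n + 4*s + 2) + 4 := by push_cast; ring
      rw [e]
      have hd : 0 < Δ ((n+4*s+2)+4) := hΔpos _ (by omega)
      calc (16*a^4)^(s+1) * Δ ((n+4*(s:ℤ)+2)+4)
          = (16*a^4)^s * (16*a^4 * Δ ((n+4*s+2)+4)) := by ring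
        _ ≤ (16*a^4)^s * Δ (n+4*s+2) :=
            mul_le_mul_of_nonneg_left h2 (by positivity)
        _ ≤ Δ (n+2) := ih
  set q : ℝ := 1/(16*a^3) with hqdef
  have hq0 : 0 < q := by positivity
  have hq1 : q < 1/2 := by
    have hcube : 1 < a^3 := one_lt_pow₀ ha (by norm_num)
    rw [hqdef, div_lt_div_iff₀ (by positivity) two_pos]
    nlinarith
  have hqa : q * (16*a^4) = a := by rw [hqdef]; field_simp
  have hbound : ∀ s : ℕ, a^s * Δ (n + 4*s + 2) ≤ q^s * Δ (n+2) := by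
    intro s
    have h1 : q^s * ((16*a^4)^s * Δ (n+4*s+2)) ≤ q^s * Δ (n+2) :=
      mul_le_mul_of_nonneg_left (key s) (by positivity)
    calc a^s * Δ (n+4*s+2) = q^s * (16*a^4)^s * Δ (n+4*s+2) := by
          rw [← mul_pow, hqa]
      _ ≤ q^s * Δ (n+2) := by rw [mul_assoc]; exact h1
  have hnonneg : ∀ s : ℕ, 0 ≤ a^s * Δ (n + 4*s + 2) := by
    intro s
    have := hΔpos (n+4*s+2) (by omega)
    positivity
  have hsumgeo : Summable (fun s : ℕ => q^s * Δ (n+2)) :=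
    (summable_geometric_of_lt_one hq0.le (by linarith)).mul_right _
  have hsum : Summable (fun s : ℕ => a^s * Δ (n + 4*s + 2)) :=
    Summable.of_nonneg_of_le hnonneg hbound hsumgeo
  refine ⟨hsum, ?_⟩
  have hd2 : 0 < Δ (n+2) := hΔpos (n+2) (by omega)
  have hdn : 0 < Δ n := hΔpos n (by omega)
  have htsum : (∑' s : ℕ, a^s * Δ (n + 4*s + 2)) ≤ Δ (n+2) / (1 - q) := by
    calc (∑' s : ℕ, a^s * Δ (n+4*s+2)) ≤ ∑' s : ℕ, q^s * Δ (n+2) :=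
        Summable.tsum_le_tsum hbound hsum hsumgeo
      _ = (1-q)⁻¹ * Δ (n+2) := by
          rw [tsum_mul_right, tsum_geometric_of_lt_one hq0.le (by linarith)]
      _ = Δ (n+2) / (1-q) := by ring
  have h1q : 0 < 1 - q := by linarith
  have hlt2 : Δ (n+2) / (1 - q) < 2 * Δ (n+2) := by
    rw [div_lt_iff₀ h1q]
    nlinarith
  have hT : (∑' s : ℕ, a^s * Δ (n + 4*s + 2)) < 2 * Δ (n+2) := lt_of_le_of_lt htsum hlt2
  have hstep := step1 n (by omega)
  have hk2 := hka (n+2) (by omega)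
  have hk3 := hka (n+3) (by omega)
  have hKK : 0 < (k (n+2) : ℝ) * (k (n+3) : ℝ) := by nlinarith
  rw [div_lt_div_iff₀ hdn hKK]
  nlinarith [(tsum_nonneg hnonneg : 0 ≤ ∑' s : ℕ, a^s * Δ (n + 4*s + 2))]
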